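/- Assume the characteristic of F is different from 3. Then the odd derivations of the Kantor double superalgebra K = Z ⊕ Zx are exactly the maps η_a for a ∈ Z, where η_a(f) = 0 and η_a(fx) = fa for f ∈ Z; moreover every η_a is inner: if a = Σᵢ gᵢδ(fᵢ) then η_a = Σᵢ D(fᵢ, gᵢx). Hence Der(K)₁ = Inder(K)₁ = {η_a : a ∈ Z}, which is F-linearly isomorphic to Z via a ↦ η_a. -/

import Mathlib

namespace CKJ

variable (F : Type*) [Field F] {Z : Type*} [CommRing Z] [Algebra F Z]

/-- Underlying module of the Cheng–Kac Jordan superalgebra `JCK(Z,δ)`: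
the even part has `Z`-coordinates `1, w₁, w₂, w₃` (indices `0,1,2,3`) and the
odd part has `Z`-coordinates `x, x₁, x₂, x₃` (indices `0,1,2,3`). -/
abbrev J (Z : Type*) := (Fin 4 → Z) × (Fin 4 → Z)

/-- The product of two even elements, in coordinates:
`w₁² = w₂² = 1`, `w₃² = -1`, `wᵢwⱼ = 0` for `i ≠ j`. -/
def emul (a c : Fin 4 → Z) : Fin 4 → Z :=
  ![a 0 * c 0 + a 1 * c 1 + a 2 * c 2 - a 3 * c 3,
    a 0 * c 1 + a 1 * c 0,
    a 0 * c 2 + a 2 * c 0,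
    a 0 * c 3 + a 3 * c 0]

/-- The product of two odd elements: `(fx)(gx) = δ(f)g - fδ(g)`,
`(fxᵢ)(gx) = (fg)wᵢ`, `(fx)(gxⱼ) = -(fg)wⱼ`, `(fxᵢ)(gxⱼ) = 0`. -/
def omul (δ : Z → Z) (b d : Fin 4 → Z) : Fin 4 → Z :=
  ![δ (b 0) * d 0 - b 0 * δ (d 0),
    b 1 * d 0 - b 0 * d 1,
    b 2 * d 0 - b 0 * d 2,
    b 3 * d 0 - b 0 * d 3]

/-- The product of an even element by an odd element: `f(gx) = (fg)x`,
`f(gxⱼ) = (fg)xⱼ`, `(fwᵢ)(gx) = (δ(f)g)xᵢ`, `(fwᵢ)(gxⱼ) = -(fg)x_{i×j}`. -/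
def eomul (δ : Z → Z) (a d : Fin 4 → Z) : Fin 4 → Z :=
  ![a 0 * d 0,
    a 0 * d 1 + δ (a 1) * d 0 + (a 2 * d 3 - a 3 * d 2),
    a 0 * d 2 + δ (a 2) * d 0 + (a 3 * d 1 - a 1 * d 3),
    a 0 * d 3 + δ (a 3) * d 0 + (a 2 * d 1 - a 1 * d 2)]

/-- The (supercommutative) multiplication of the Cheng–Kac Jordan
superalgebra `JCK(Z,δ)`. -/
def jmul (δ : Z → Z) (u v : J Z) : J Z :=
  (emul u.1 v.1 + omul δ u.2 v.2, eomul δ u.1 v.2 + eomul δ v.1 u.2)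

/-- `fw f k` is the even element `f·wₖ` (with the convention `w₀ = 1`). -/
def fw (f : Z) (k : Fin 4) : J Z := (fun j => if j = k then f else 0, 0)

/-- `fone f` is the even element `f·1`. -/
def fone (f : Z) : J Z := fw f 0

/-- `fxi f k` is the odd element `f·xₖ` (with the convention `x₀ = x`). -/
def fxi (f : Z) (k : Fin 4) : J Z := (0, fun j => if j = k then f else 0)

/-- `fx f` is the odd element `f·x`. -/
def fx (f : Z) : J Z := fxi f 0

/-- The grading involution of the superalgebra `J` (identity on the even part,
minus the identity on the odd part). -/
def jsig (u : J Z) : J Z := (u.1, -u.2)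

/-- `F`-linearity of a map `J → J`. -/
def IsLin (d : J Z → J Z) : Prop :=
  (∀ u v, d (u + v) = d u + d v) ∧ ∀ (c : F) (u), d (c • u) = c • d u

/-- `d` is an even derivation of the superalgebra `J = JCK(Z,δ)`. -/
def IsDer0 (δ : Z → Z) (d : J Z → J Z) : Prop :=
  IsLin F d ∧ (∀ u : J Z, u.2 = 0 → (d u).2 = 0) ∧ (∀ u : J Z, u.1 = 0 → (d u).1 = 0) ∧
    ∀ u v, d (jmul δ u v) = jmul δ (d u) v + jmul δ u (d v)

/-- `d` is an odd derivation of the superalgebra `J = JCK(Z,δ)`. -/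
def IsDer1 (δ : Z → Z) (d : J Z → J Z) : Prop :=
  IsLin F d ∧ (∀ u : J Z, u.2 = 0 → (d u).1 = 0) ∧ (∀ u : J Z, u.1 = 0 → (d u).2 = 0) ∧
    ∀ u v, d (jmul δ u v) = jmul δ (d u) v + jmul δ (jsig u) (d v)

/-- The set `Der(J) = Der(J)₀ ⊕ Der(J)₁` of all derivations of `J`. -/
def DerJSet (δ : Z → Z) : Set (J Z → J Z) :=
  {d | ∃ d0 d1, IsDer0 F δ d0 ∧ IsDer1 F δ d1 ∧ d = d0 + d1}

/-- `u` is homogeneous of parity `p` (`p = true` means odd). -/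
def IsHom (p : Bool) (u : J Z) : Prop := if p then u.1 = 0 else u.2 = 0

/-- `(-1)^{pq}` -/
def sgn (p q : Bool) : ℤ := if p && q then -1 else 1

/-- `Dgen δ ε u v` is the inner derivation `D(u,v) : c ↦ u(vc) - ε·v(uc)`;
for homogeneous `u`, `v` one takes `ε = (-1)^{|u||v|}`. -/
def Dgen (δ : Z → Z) (ε : ℤ) (u v : J Z) : J Z → J Z :=
  fun c => jmul δ u (jmul δ v c) - ε • jmul δ v (jmul δ u c)

/-- Generators `D(u,v)`, `u`, `v` homogeneous, of `Inder(J)`. -/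
def InderSet (δ : Z → Z) : Set (J Z → J Z) :=
  {d | ∃ u v p q, IsHom p u ∧ IsHom q v ∧ d = Dgen δ (sgn p q) u v}

/-- Generators of the even part `Inder(J)₀`. -/
def InderSet0 (δ : Z → Z) : Set (J Z → J Z) :=
  {d | ∃ u v p, IsHom p u ∧ IsHom p v ∧ d = Dgen δ (sgn p p) u v}

/-- Generators of the odd part `Inder(J)₁`. -/
def InderSet1 (δ : Z → Z) : Set (J Z → J Z) :=
  {d | ∃ u v p, IsHom p u ∧ IsHom (!p) v ∧ d = Dgen δ 1 u v}

/-- Coordinate index of each sector of the `ℤ₂×ℤ₂`-grading: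
`[0,0] ↦ 0`, `[1,0] ↦ 1`, `[0,1] ↦ 2`, `[1,1] ↦ 3`. -/
def idx (t : ZMod 2 × ZMod 2) : Fin 4 :=
  if t = (0, 0) then 0 else if t = (1, 0) then 1 else if t = (0, 1) then 2 else 3

/-- The sector `J^{[t]}` of the `ℤ₂×ℤ₂`-grading of `J`:
`J^{[0,0]} = Z ⊕ Zx`, `J^{[1,0]} = Zw₁ ⊕ Zx₁`, `J^{[0,1]} = Zw₂ ⊕ Zx₂`,
`J^{[1,1]} = Zw₃ ⊕ Zx₃`. -/
def gset (t : ZMod 2 × ZMod 2) : Set (J Z) :=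
  {u | ∀ k : Fin 4, k ≠ idx t → u.1 k = 0 ∧ u.2 k = 0}

/-- `d : J → J` has degree `t` with respect to the `ℤ₂×ℤ₂`-grading of `J`. -/
def DerDeg (t : ZMod 2 × ZMod 2) (d : J Z → J Z) : Prop :=
  ∀ s u, u ∈ gset s → d u ∈ gset (s + t)

/-! The Kantor double superalgebra of vector type `K = Z ⊕ Zx`, realised
as `Z × Z`: the pair `(f, g)` represents `f + gx`. -/

/-- The multiplication of `K = Z ⊕ Zx`. -/
def kmul (δ : Z → Z) (u v : Z × Z) : Z × Z :=
  (u.1 * v.1 + (δ u.2 * v.2 - u.2 * δ v.2), u.1 * v.2 + v.1 * u.2)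

/-- The grading involution of `K`. -/
def ksig (u : Z × Z) : Z × Z := (u.1, -u.2)

/-- `F`-linearity of a map `K → K`. -/
def IsKLin (d : Z × Z → Z × Z) : Prop :=
  (∀ u v, d (u + v) = d u + d v) ∧ ∀ (c : F) (u), d (c • u) = c • d u

/-- `d` is an even derivation of `K = Z ⊕ Zx`. -/
def IsKDer0 (δ : Z → Z) (d : Z × Z → Z × Z) : Prop :=
  IsKLin F d ∧ (∀ u : Z × Z, u.2 = 0 → (d u).2 = 0) ∧ (∀ u : Z × Z, u.1 = 0 → (d u).1 = 0) ∧
    ∀ u v, d (kmul δ u v) = kmul δ (d u) v + kmul δ u (d v)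

/-- `d` is an odd derivation of `K = Z ⊕ Zx`. -/
def IsKDer1 (δ : Z → Z) (d : Z × Z → Z × Z) : Prop :=
  IsKLin F d ∧ (∀ u : Z × Z, u.2 = 0 → (d u).1 = 0) ∧ (∀ u : Z × Z, u.1 = 0 → (d u).2 = 0) ∧
    ∀ u v, d (kmul δ u v) = kmul δ (d u) v + kmul δ (ksig u) (d v)

/-- `Dk δ ε u v` is the inner derivation `D(u,v) : c ↦ u(vc) - ε·v(uc)` of `K`. -/
def Dk (δ : Z → Z) (ε : ℤ) (u v : Z × Z) : Z × Z → Z × Z :=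
  fun c => kmul δ u (kmul δ v c) - ε • kmul δ v (kmul δ u c)

/-- `u ∈ K` is homogeneous of parity `p`. -/
def KHom (p : Bool) (u : Z × Z) : Prop := if p then u.1 = 0 else u.2 = 0

/-- Generators `D(u,v)`, `u`, `v` homogeneous, of `Inder(K)`. -/
def InderKSet (δ : Z → Z) : Set (Z × Z → Z × Z) :=
  {d | ∃ u v p q, KHom p u ∧ KHom q v ∧ d = Dk δ (sgn p q) u v}

/-- Generators of the even part `Inder(K)₀`. -/
def InderKSet0 (δ : Z → Z) : Set (Z × Z → Z × Z) :=
  {d | ∃ u v p, KHom p u ∧ KHom p v ∧ d = Dk δ (sgn p p) u v}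

/-- Generators of the odd part `Inder(K)₁`. -/
def InderKSet1 (δ : Z → Z) : Set (Z × Z → Z × Z) :=
  {d | ∃ u v p, KHom p u ∧ KHom (!p) v ∧ d = Dk δ 1 u v}

/-- The odd derivation `η_a` of `K`: `η_a(f) = 0`, `η_a(fx) = fa`. -/
def keta (a : Z) : Z × Z → Z × Z := fun u => (a * u.2, 0)

/-- `kcheck μ a` is the even map `μ̌` of `K` with `μ̌(f) = μ(f)` and
`μ̌(gx) = (μ(g) + ag)x`. -/
def kcheck (μ : Z → Z) (a : Z) : Z × Z → Z × Z := fun u => (μ u.1, μ u.2 + a * u.2)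

/-- The odd map `(aδ)⁻` of `K` (relevant in characteristic 3):
`(aδ)⁻(f) = (aδ(f))x`, `(aδ)⁻(fx) = δ(aδ(f))`. -/
def kminus (δ : Z → Z) (a : Z) : Z × Z → Z × Z := fun u => (δ (a * δ u.2), a * δ u.1)

/-- `D̄er(K) = Der(K)₀ ⊕ {η_a : a ∈ Z}`. -/
def DerbarK (δ : Z → Z) : Set (Z × Z → Z × Z) :=
  {e | ∃ e0 a, IsKDer0 F δ e0 ∧ e = e0 + keta a}

/-- The extension `∂̃` to `J` of the even derivation `∂ = μ̌ = kcheck μ a`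
of `K`: `∂̃|_K = ∂`, `∂̃(fwᵢ) = μ(f)wᵢ`, `∂̃(fxᵢ) = (μ(f) - af)xᵢ`. -/
def jtilde (μ : Z → Z) (a : Z) : J Z → J Z :=
  fun u => (fun k => μ (u.1 k),
    fun k => if k = 0 then μ (u.2 0) + a * u.2 0 else μ (u.2 k) - a * u.2 k)

/-- The odd derivation `η̃_a` of `J`: `η̃_a(Z) = 0`, `η̃_a(x) = a`,
`η̃_a(xⱼ) = 0` (hence `η̃_a(fwᵢ) = -(af)xᵢ`). -/
def jeta (a : Z) : J Z → J Z :=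
  fun u => (fun k => if k = 0 then a * u.2 0 else 0,
            fun k => if k = 0 then 0 else -(a * u.1 k))

/-- The even component of an endomorphism of `J`. -/
def evp (X : J Z → J Z) : J Z → J Z := fun u => (2 : F)⁻¹ • (X u + jsig (X (jsig u)))

/-- The odd component of an endomorphism of `J`. -/
def odp (X : J Z → J Z) : J Z → J Z := fun u => (2 : F)⁻¹ • (X u - jsig (X (jsig u)))

/-- The supercommutator `[X,Y]` in `End_F(J)`. -/
def sbr (X Y : J Z → J Z) : J Z → J Z :=
  X ∘ Y - Y ∘ X + (2 : F) • (odp F Y ∘ odp F X)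

/-- The odd component of an endomorphism of `K`. -/
def kodp (e : Z × Z → Z × Z) : Z × Z → Z × Z :=
  fun u => (2 : F)⁻¹ • (e u - ksig (e (ksig u)))

/-- The supercommutator `[e,e']` in `End_F(K)`. -/
def ksbr (e e' : Z × Z → Z × Z) : Z × Z → Z × Z :=
  e ∘ e' - e' ∘ e + (2 : F) • (kodp F e' ∘ kodp F e)

/-- The automorphism `τ₁ = (12)(34)`: identity on `J^{[0,0]} ⊕ J^{[1,1]}`,
`-1` on `J^{[1,0]} ⊕ J^{[0,1]}`. -/
def tau1Map : J Z → J Z :=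
  fun u => (![u.1 0, -u.1 1, -u.1 2, u.1 3], ![u.2 0, -u.2 1, -u.2 2, u.2 3])

/-- The automorphism `τ₂ = (23)(41)`: identity on `J^{[0,0]} ⊕ J^{[1,0]}`,
`-1` on `J^{[0,1]} ⊕ J^{[1,1]}`. -/
def tau2Map : J Z → J Z :=
  fun u => (![u.1 0, u.1 1, -u.1 2, -u.1 3], ![u.2 0, u.2 1, -u.2 2, -u.2 3])

/-- The automorphism `φ = (123)`: the `Z`-linear map with `φ(vⱼ) = vⱼ₊₁`,
`φ(yⱼ) = yⱼ₊₁` (indices mod 3), `φ(1) = 1`, `φ(y) = y`, where `v₁ = i·w₁`,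
`v₂ = i·w₂`, `v₃ = w₃`, `y = x`, `y₁ = i·x₁`, `y₂ = i·x₂`, `y₃ = x₃`.
In the `w`/`x` coordinates: `w₁ ↦ w₂ ↦ -i·w₃`, `w₃ ↦ i·w₁`,
`x₁ ↦ x₂ ↦ -i·x₃`, `x₃ ↦ i·x₁`. -/
def phiMap (i : F) : J Z → J Z :=
  fun u => (![u.1 0, algebraMap F Z i * u.1 3, u.1 1, -(algebraMap F Z i * u.1 2)],
            ![u.2 0, algebraMap F Z i * u.2 3, u.2 1, -(algebraMap F Z i * u.2 2)])

/-- The automorphism `τ = (12)`: `Z`-linear with `τ(1) = 1`, `τ(y) = y`,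
`τ(v₁) = -v₂`, `τ(v₂) = -v₁`, `τ(v₃) = -v₃`, `τ(y₁) = -y₂`, `τ(y₂) = -y₁`,
`τ(y₃) = -y₃`. -/
def tauMap : J Z → J Z :=
  fun u => (![u.1 0, -u.1 2, -u.1 1, -u.1 3], ![u.2 0, -u.2 2, -u.2 1, -u.2 3])

/-- `g` is an `F`-algebra automorphism of `J = JCK(Z,δ)`. -/
def IsJAut (δ : Z → Z) (g : J Z → J Z) : Prop :=
  IsLin F g ∧ Function.Bijective g ∧ ∀ u v, g (jmul δ u v) = jmul δ (g u) (g v)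

/-- The coordinatization map `Φ : K → Der(J)^{[1,1]}`,
`Φ(f + gy) = D(v₁, f·v₂) + i·D(v₃, g·y)`. -/
def Phi (δ : Z → Z) (i : F) (p : Z × Z) : J Z → J Z :=
  Dgen δ 1 (fw (algebraMap F Z i) 1) (fw (p.1 * algebraMap F Z i) 2) +
    i • Dgen δ 1 (fw (1 : Z) 3) (fx p.2)

/-- `ι₁(z) = φ ∘ Φ(z) ∘ φ⁻¹`, `ι₂(z) = φ² ∘ Φ(z) ∘ φ⁻²`, `ι₃(z) = Φ(z)`
(indexed here by `j = 0, 1, 2` respectively; note `φ⁻¹ = φ²`). -/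
def iot (δ : Z → Z) (i : F) (j : Fin 3) (z : Z × Z) : J Z → J Z :=
  if j = 0 then phiMap F i ∘ Phi F δ i z ∘ (phiMap F i ∘ phiMap F i)
  else if j = 1 then (phiMap F i ∘ phiMap F i) ∘ Phi F δ i z ∘ phiMap F i
  else Phi F δ i z

/-- The embedding `K = Z ⊕ Zx ⊆ J`. -/
def kap : Z × Z → J Z :=
  fun p => (fun j => if j = 0 then p.1 else 0, fun j => if j = 0 then p.2 else 0)

/-- The projection `J → K` onto the `Z ⊕ Zx` coordinates. -/
def pik : J Z → Z × Z := fun u => (u.1 0, u.2 0)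

end CKJ


open CKJ
section Aux

variable {F : Type*} [Field F] {Z : Type*} [CommRing Z] [Algebra F Z]

lemma keta_add' (a b : Z) : keta (a + b) = keta a + keta b := by
  funext u; simp [keta, Prod.ext_iff, add_mul]

lemma keta_smul' (c : F) (a : Z) : keta (c • a) = c • keta a := by
  funext u; simp [keta, Prod.ext_iff, smul_mul_assoc]

lemma keta_neg' (a : Z) : keta (-a) = -keta a := by
  funext u; simp [keta, Prod.ext_iff]

/-- `keta` as a linear map. -/
def ketaLM (F : Type*) [Field F] (Z : Type*) [CommRing Z] [Algebra F Z] :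
    Z →ₗ[F] (Z × Z → Z × Z) where
  toFun := keta
  map_add' := keta_add'
  map_smul' := fun c a => by simpa using keta_smul' c a

lemma keta_sum {ι : Type*} (s : Finset ι) (c : ι → Z) :
    keta (∑ j ∈ s, c j) = ∑ j ∈ s, keta (c j) := by
  classical
  induction s using Finset.induction with
  | empty => funext u; simp [keta]
  | insert _ _ h ih => rw [Finset.sum_insert h, Finset.sum_insert h, keta_add', ih]

lemma Dk_eq_keta (δ : Derivation F Z Z) (f g : Z) :
    Dk (⇑δ) 1 (f, (0 : Z)) ((0 : Z), g) = keta (g * δ f) := by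
  funext c
  obtain ⟨h, k⟩ := c
  simp only [Dk, kmul, keta, one_smul, Prod.mk_sub_mk, Prod.mk.injEq, map_zero,
    Derivation.leibniz, smul_eq_mul, map_add, mul_zero, zero_mul, add_zero, zero_add,
    sub_zero, zero_sub, Prod.ext_iff]
  constructor <;> ring

lemma keta_isKDer1 (δ : Derivation F Z Z) (a : Z) : IsKDer1 F (⇑δ) (keta a) := by
  refine ⟨⟨fun u v => ?_, fun c u => ?_⟩, fun u hu => ?_, fun u hu => ?_, fun u v => ?_⟩
  · simp [keta, Prod.ext_iff, mul_add]
  · simp [keta, Prod.ext_iff, mul_smul_comm]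
  · simp [keta, hu]
  · simp [keta]
  · simp only [keta, kmul, ksig, map_zero, Prod.mk_add_mk, Prod.mk.injEq, Prod.ext_iff]
    constructor <;> ring

lemma kder1_eq_keta {h3' : (3 : F) ≠ 0} (δ : Derivation F Z Z)
    (hspan : Submodule.span F {z : Z | ∃ f g : Z, z = f * δ g} = ⊤)
    (d : Z × Z → Z × Z) (hd : IsKDer1 F (⇑δ) d) : ∃ a : Z, d = keta a := by
  obtain ⟨⟨hadd, hsmul⟩, he, ho, hder⟩ := hd
  have hd0 : d 0 = 0 := by simpa using hsmul 0 0
  obtain ⟨φ, hφdef⟩ : ∃ φ : Z → Z, ∀ f : Z, φ f = (d (f, 0)).2 := ⟨_, fun _ => rfl⟩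
  obtain ⟨ψ, hψdef⟩ : ∃ ψ : Z → Z, ∀ g : Z, ψ g = (d (0, g)).1 := ⟨_, fun _ => rfl⟩
  have hrep : ∀ f g : Z, d (f, g) = (ψ g, φ f) := by
    intro f g
    have h1 : ((f, g) : Z × Z) = (f, 0) + (0, g) := by simp
    rw [h1, hadd, hφdef, hψdef]
    exact Prod.ext (by simp [he (f, 0) rfl]) (by simp [ho (0, g) rfl])
  have hφ0 : φ 0 = 0 := by
    rw [hφdef, show ((0, 0) : Z × Z) = 0 from rfl, hd0]; rfl
  have hψ0 : ψ 0 = 0 := by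
    rw [hψdef, show ((0, 0) : Z × Z) = 0 from rfl, hd0]; rfl
  have hφadd : ∀ f g : Z, φ (f + g) = φ f + φ g := by
    intro f g
    rw [hφdef, hφdef, hφdef, show ((f + g, 0) : Z × Z) = (f, 0) + (0, 0) + ((g, 0) - (0, 0)) from by simp, hadd]
    simp [hadd]
  have hφmul : ∀ f g : Z, φ (f * g) = g * φ f + f * φ g := by
    intro f g
    have h := hder (f, 0) (g, 0)
    simp only [kmul, ksig, hrep, map_zero, mul_zero, zero_mul, add_zero, zero_add, sub_zero,
      neg_zero, hφ0, hψ0, Prod.mk_add_mk, Prod.mk.injEq] at h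
    linear_combination h.2
  have hφ1 : φ 1 = 0 := by
    have h := hφmul 1 1
    simp only [mul_one, one_mul] at h
    linear_combination -h
  have hstar : ∀ f g : Z, ψ (f * g) = δ (φ f) * g - φ f * δ g + f * ψ g := by
    intro f g
    have h := hder (f, 0) (0, g)
    simp only [kmul, ksig, hrep, map_zero, mul_zero, zero_mul, add_zero, zero_add, sub_zero,
      neg_zero, hφ0, hψ0, Prod.mk_add_mk, Prod.mk.injEq] at h
    linear_combination h.1
  have hψeq : ∀ f : Z, ψ f = φ (δ f) + f * ψ 1 := by
    intro f
    have h := hder (0, f) (0, 1)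
    simp only [kmul, ksig, hrep, map_zero, Derivation.map_one_eq_zero, mul_zero, zero_mul,
      mul_one, one_mul, add_zero, zero_add, sub_zero, neg_zero, hφ0, hψ0,
      Prod.mk_add_mk, Prod.mk.injEq] at h
    linear_combination -h.2
  have hI : ∀ f g : Z, g * φ (δ f) + δ f * φ g + 2 * (φ f * δ g) = g * δ (φ f) := by
    intro f g
    have hL : δ (f * g) = f * δ g + g * δ f := by
      rw [Derivation.leibniz]; simp [smul_eq_mul]
    have hc : φ (δ (f * g)) = δ g * φ f + f * φ (δ g) + (δ f * φ g + g * φ (δ f)) := by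
      rw [hL, hφadd, hφmul, hφmul]
    linear_combination hstar f g - hψeq (f * g) - hc + f * hψeq g
  have hcomm : ∀ f : Z, φ (δ f) = δ (φ f) := by
    intro f
    have h := hI f 1
    simp only [one_mul, hφ1, mul_zero, Derivation.map_one_eq_zero, add_zero] at h
    linear_combination h
  have hI' : ∀ f g : Z, δ f * φ g + 2 * (φ f * δ g) = 0 := by
    intro f g
    linear_combination hI f g - g * hcomm f
  have h3x : ∀ f g : Z, (3 : Z) * (φ f * δ g) = 0 := by
    intro f g
    linear_combination 2 * hI' f g - hI' g f
  have hzero : ∀ f g : Z, φ f * δ g = 0 := by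
    intro f g
    have h : (3 : F) • (φ f * δ g) = 0 := by
      rw [Algebra.smul_def, map_ofNat]; exact h3x f g
    have h' := congrArg (fun z : Z => (3 : F)⁻¹ • z) h
    simpa [smul_smul, inv_mul_cancel₀ h3'] using h'
  have hφzero : ∀ f : Z, φ f = 0 := by
    intro f
    have hmul0 : ∀ z ∈ Submodule.span F {z : Z | ∃ u v : Z, z = u * δ v}, φ f * z = 0 := by
      intro z hz
      induction hz using Submodule.span_induction with
      | mem z hzz => obtain ⟨u, v, rfl⟩ := hzz; linear_combination u * hzero f v
      | zero => simp
      | add x y _ _ hx hy => rw [mul_add, hx, hy, add_zero]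
      | smul c x _ hx => rw [mul_smul_comm, hx, smul_zero]
    have h1 : (1 : Z) ∈ Submodule.span F {z : Z | ∃ u v : Z, z = u * δ v} := by
      rw [hspan]; trivial
    simpa using hmul0 1 h1
  refine ⟨ψ 1, funext fun u => ?_⟩
  rw [show u = (u.1, u.2) from rfl, hrep]
  refine Prod.ext ?_ ?_
  · show ψ u.2 = ψ 1 * u.2
    rw [hψeq, hφzero, zero_add, mul_comm]
  · show φ u.1 = 0
    exact hφzero u.1

end Aux

theorem stmt6 {F : Type*} [Field F] (h2 : (2 : F) ≠ 0) (h3 : (3 : F) ≠ 0)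
    {Z : Type*} [CommRing Z] [Algebra F Z]
    (δ : Derivation F Z Z)
    (hspan : Submodule.span F {z : Z | ∃ f g : Z, z = f * δ g} = ⊤) :
    -- the odd derivations of `K` are exactly the maps `η_a`, `a ∈ Z`
    ({d : Z × Z → Z × Z | IsKDer1 F (⇑δ) d} = {d | ∃ a : Z, d = keta a}) ∧
    -- `D(f, gx) = η_{gδ(f)}`
    (∀ f g : Z, Dk (⇑δ) 1 (f, (0 : Z)) ((0 : Z), g) = keta (g * δ f)) ∧
    -- if `a = Σᵢ gᵢ δ(fᵢ)` then `η_a = Σᵢ D(fᵢ, gᵢx)`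
    (∀ (n : ℕ) (fv gv : Fin n → Z) (a : Z), a = ∑ j, gv j * δ (fv j) →
      keta a = ∑ j, Dk (⇑δ) 1 (fv j, (0 : Z)) ((0 : Z), gv j)) ∧
    -- `Der(K)₁ = Inder(K)₁ = {η_a : a ∈ Z}`
    ((Submodule.span F (InderKSet1 (⇑δ)) : Set (Z × Z → Z × Z))
        = {d | ∃ a : Z, d = keta a}) ∧
    -- `a ↦ η_a` is an `F`-linear bijection of `Z` onto `Der(K)₁`
    Function.Injective (keta (Z := Z)) ∧
    (∀ a b : Z, keta (a + b) = keta a + keta b) ∧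
    (∀ (c : F) (a : Z), keta (c • a) = c • keta a) := by
  refine ⟨?_, Dk_eq_keta δ, ?_, ?_, ?_, keta_add', keta_smul'⟩
  · ext d
    simp only [Set.mem_setOf_eq]
    constructor
    · exact kder1_eq_keta (h3' := h3) δ hspan d
    · rintro ⟨a, rfl⟩; exact keta_isKDer1 δ a
  · intro n fv gv a ha
    subst ha
    rw [keta_sum]
    exact Finset.sum_congr rfl fun j _ => (Dk_eq_keta δ _ _).symm
  · apply Set.Subset.antisymm
    · have hsub : InderKSet1 (⇑δ) ⊆ ↑(LinearMap.range (ketaLM F Z)) := by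
        rintro d ⟨⟨u1, u2⟩, ⟨v1, v2⟩, p, hu, hv, rfl⟩
        cases p with
        | false =>
          have hu2 : u2 = 0 := hu
          have hv1 : v1 = 0 := hv
          subst hu2 hv1
          exact ⟨v2 * δ u1, (Dk_eq_keta δ u1 v2).symm⟩
        | true =>
          have hu1 : u1 = 0 := hu
          have hv2 : v2 = 0 := hv
          subst hu1 hv2
          refine ⟨-(u2 * δ v1), ?_⟩
          have hDk : Dk (⇑δ) 1 ((0 : Z), u2) (v1, (0 : Z)) = keta (-(u2 * δ v1)) := by
            rw [keta_neg', ← Dk_eq_keta δ v1 u2]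
            funext c
            simp [Dk, one_smul, neg_sub]
          exact hDk.symm
      have hle : Submodule.span F (InderKSet1 (⇑δ)) ≤ LinearMap.range (ketaLM F Z) :=
        Submodule.span_le.2 hsub
      intro d hd
      obtain ⟨a, ha⟩ := hle hd
      exact ⟨a, ha.symm⟩
    · rintro _ ⟨a, rfl⟩
      have ha : a ∈ Submodule.span F {z : Z | ∃ f g : Z, z = f * δ g} := by
        rw [hspan]; trivial
      have hmem := Submodule.apply_mem_span_image_of_mem_span (ketaLM F Z) ha
      refine Submodule.span_mono ?_ hmem
      rintro _ ⟨z, ⟨f, g, rfl⟩, rfl⟩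
      exact ⟨(g, 0), (0, f), false, rfl, rfl, (Dk_eq_keta δ g f).symm⟩
  · intro a b h
    have := congrFun h (0, 1)
    simpa [keta] using this
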